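/- Fix natural numbers s < s' and suppose Assumption A1 holds for g. Then for all natural numbers t₀, t with s' < t₀ ≤ t, one has I_{t,s,s'} ⊆ I_{t₀,s,s'}; that is, the set of means on which the candidate change s beats the candidate change s' is non-increasing in time. -/
import Mathlib


/-- The functional cost of candidate change `s` at time `t`, evaluated at mean `μ`:
`f̃_{t,s}(μ) = F(s) + Σ_{i=s+1}^{t} (y i − μ)² + α − β·g(t−s)`. -/
noncomputable def ftilde (y F : ℕ → ℝ) (α β : ℝ) (g : ℕ → ℝ) (t s : ℕ) (μ : ℝ) : ℝ :=
  F s + ∑ i ∈ Finset.Icc (s + 1) t, (y i - μ) ^ 2 + α - β * g (t - s)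

/-- `I_{t,s,s'}`: the set of means on which change `s` beats change `s'` at time `t`. -/
def Iset (y F : ℕ → ℝ) (α β : ℝ) (g : ℕ → ℝ) (t s s' : ℕ) : Set ℝ :=
  {μ : ℝ | ftilde y F α β g t s μ ≤ ftilde y F α β g t s' μ}

/-- under Assumption A1, for fixed `s < s'`, the comparison set
`I_{t,s,s'}` is non-increasing in `t`: for `s' < t₀ ≤ t`, `I_{t,s,s'} ⊆ I_{t₀,s,s'}`. -/
theorem Iset_antitone (y F : ℕ → ℝ) (α β : ℝ) (hβ : 0 ≤ β) (g : ℕ → ℝ)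
    (hA1 : ∀ s s' : ℕ, s < s' →
      (∀ t₁ t₂ : ℕ, s' < t₁ → t₁ ≤ t₂ →
        g (t₁ - s') - g (t₁ - s) ≤ g (t₂ - s') - g (t₂ - s)) ∧
      Filter.Tendsto (fun t : ℕ => g (t - s') - g (t - s)) Filter.atTop (nhds 0))
    (s s' : ℕ) (hss' : s < s') :
    ∀ t₀ t : ℕ, s' < t₀ → t₀ ≤ t →
      Iset y F α β g t s s' ⊆ Iset y F α β g t₀ s s' := by

  intro t₀ t ht₀ htt μ hμ
  simp only [Iset, Set.mem_setOf_eq, ftilde] at hμ ⊢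
  have hmono := (hA1 s s' hss').1 t₀ t ht₀ htt
  have hs : s ≤ s' := le_of_lt hss'
  have hs't₀ : s' ≤ t₀ := le_of_lt ht₀
  have hsplit : ∀ a : ℕ, a ≤ t₀ →
      ∑ i ∈ Finset.Icc (a + 1) t, (y i - μ) ^ 2
      = ∑ i ∈ Finset.Icc (a + 1) t₀, (y i - μ) ^ 2
        + ∑ i ∈ Finset.Icc (t₀ + 1) t, (y i - μ) ^ 2 := by
    intro a ha
    simp only [Finset.Icc_add_one_left_eq_Ioc]
    exact (Finset.sum_Ioc_consecutive _ ha htt).symm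
  rw [hsplit s (hs.trans hs't₀), hsplit s' hs't₀] at hμ
  nlinarith [hμ, hmono, hβ]
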